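/- If f : 𝕏 → 𝕏 is a measurable bijection and g : 𝕐 → 𝕐 is an isometry of (𝕐, d_𝕐), then E_{f(X)}[W_{d_𝕐,p}(L(g(Y)|f(X)), L(g(Y)))^p] = E_X[W_{d_𝕐,p}(L(Y|X), L(Y))^p]. -/

import Mathlib

open MeasureTheory ProbabilityTheory

/-- The Wasserstein distance of order `p` with ground cost `d`, defined as the infimum
over couplings of `P` and `Q` of the `p`-th root of the expected `p`-th power cost. -/
noncomputable def Wass {α : Type*} [MeasurableSpace α]
    (d : α → α → ℝ) (p : ℝ) (P Q : Measure α) : ℝ :=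
  sInf ((fun γ : Measure (α × α) => (∫ z, d z.1 z.2 ^ p ∂γ) ^ (1 / p)) ''
    {γ | γ.map Prod.fst = P ∧ γ.map Prod.snd = Q})

lemma wass_aux_subset {α : Type*} [MeasurableSpace α] [PseudoMetricSpace α]
    (e : α ≃ᵐ α) (he : ∀ a b, dist (e a) (e b) = dist a b) (p : ℝ) (P Q : Measure α) :
    ((fun γ : Measure (α × α) => (∫ z, dist z.1 z.2 ^ p ∂γ) ^ (1 / p)) ''
      {γ | γ.map Prod.fst = P ∧ γ.map Prod.snd = Q}) ⊆
    ((fun γ : Measure (α × α) => (∫ z, dist z.1 z.2 ^ p ∂γ) ^ (1 / p)) ''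
      {γ | γ.map Prod.fst = P.map e ∧ γ.map Prod.snd = Q.map e}) := by
  rintro _ ⟨γ, ⟨h1, h2⟩, rfl⟩
  refine ⟨γ.map (e.prodCongr e), ⟨?_, ?_⟩, ?_⟩
  · rw [Measure.map_map measurable_fst (e.prodCongr e).measurable, ← h1,
      Measure.map_map e.measurable measurable_fst]
    rfl
  · rw [Measure.map_map measurable_snd (e.prodCongr e).measurable, ← h2,
      Measure.map_map e.measurable measurable_snd]
    rfl
  · simp only
    rw [MeasureTheory.integral_map_equiv (e.prodCongr e)
      (fun z : α × α => dist z.1 z.2 ^ p)]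
    congr 1
    refine integral_congr_ae (Filter.Eventually.of_forall fun z => ?_)
    simp [MeasurableEquiv.prodCongr, he]

lemma wass_map {α : Type*} [MeasurableSpace α] [PseudoMetricSpace α]
    (e : α ≃ᵐ α) (he : ∀ a b, dist (e a) (e b) = dist a b) (p : ℝ) (P Q : Measure α) :
    Wass (fun y y' => dist y y') p (P.map e) (Q.map e)
      = Wass (fun y y' => dist y y') p P Q := by
  have he' : ∀ a b, dist (e.symm a) (e.symm b) = dist a b := by
    intro a b
    conv_rhs => rw [← e.apply_symm_apply a, ← e.apply_symm_apply b]
    exact (he _ _).symm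
  have hPe : (P.map e).map e.symm = P := by
    rw [Measure.map_map e.symm.measurable e.measurable]
    simp
  have hQe : (Q.map e).map e.symm = Q := by
    rw [Measure.map_map e.symm.measurable e.measurable]
    simp
  unfold Wass
  congr 1
  refine Set.Subset.antisymm ?_ (wass_aux_subset e he p P Q)
  have h := wass_aux_subset e.symm he' p (P.map e) (Q.map e)
  rwa [hPe, hQe] at h

lemma ae_map_equiv {α β : Type*} [MeasurableSpace α] [MeasurableSpace β]
    (e : α ≃ᵐ β) (ν : Measure α) {P : β → Prop} (h : ∀ᵐ y ∂ ν.map e, P y) :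
    ∀ᵐ x ∂ν, P (e x) := by
  rw [Filter.eventually_iff, mem_ae_iff] at h ⊢
  have : {x | P (e x)}ᶜ = e ⁻¹' ({y | P y}ᶜ) := rfl
  rw [this, ← MeasurableEquiv.map_apply e]
  exact h

theorem stmt9 {Ω 𝕏 𝕐 : Type*} [MeasurableSpace Ω] [MeasurableSpace 𝕏]
    [MetricSpace 𝕐] [PolishSpace 𝕐] [MeasurableSpace 𝕐] [BorelSpace 𝕐] [Nonempty 𝕐]
    (μ : Measure Ω) [IsProbabilityMeasure μ]
    (X : Ω → 𝕏) (Y : Ω → 𝕐) (hX : Measurable X) (hY : Measurable Y)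
    (p : ℝ) (hp : 1 ≤ p) (y₀ : 𝕐)
    (hmY : Integrable (fun ω => dist (Y ω) y₀ ^ p) μ)
    (f : 𝕏 ≃ᵐ 𝕏) (g : 𝕐 → 𝕐) (hg : Isometry g) (hgb : Function.Bijective g) :
    (∫ x, Wass (fun y y' => dist y y') p
        (condDistrib (fun ω => g (Y ω)) (fun ω => f (X ω)) μ x)
        (μ.map (fun ω => g (Y ω))) ^ p ∂(μ.map (fun ω => f (X ω))))
      = ∫ x, Wass (fun y y' => dist y y') p (condDistrib Y X μ x) (μ.map Y) ^ p
          ∂(μ.map X) := by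
  -- build the measurable equiv from g
  let eI : 𝕐 ≃ᵢ 𝕐 := { toEquiv := Equiv.ofBijective g hgb, isometry_toFun := hg }
  let e : 𝕐 ≃ᵐ 𝕐 := eI.toHomeomorph.toMeasurableEquiv
  have hge : ∀ y, e y = g y := fun y => rfl
  have hgm : Measurable g := hg.continuous.measurable
  have he : ∀ a b, dist (e a) (e b) = dist a b := fun a b => hg.dist_eq a b
  -- the candidate kernel
  let κ : Kernel 𝕏 𝕐 :=
    Kernel.map ((condDistrib Y X μ).comap f.symm f.symm.measurable) g
  haveI : IsMarkovKernel κ := Kernel.IsMarkovKernel.map _ hgm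
  have hκapp : ∀ x, κ (f x) = (condDistrib Y X μ x).map g := by
    intro x
    show Kernel.map _ g (f x) = _
    rw [Kernel.map_apply _ hgm, Kernel.comap_apply, f.symm_apply_apply]
  -- disintegration of μ.map (X, Y)
  have hdis : μ.map X ⊗ₘ condDistrib Y X μ = μ.map (fun ω => (X ω, Y ω)) := by
    rw [condDistrib, ← Measure.fst_map_prodMk (X := X) hY]
    exact (μ.map fun ω => (X ω, Y ω)).disintegrate _
  have hfXm : Measurable fun ω => f (X ω) := f.measurable.comp hX
  have hgYm : Measurable fun ω => g (Y ω) := hgm.comp hY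
  have hmapfX : μ.map (fun ω => f (X ω)) = (μ.map X).map f :=
    (Measure.map_map f.measurable hX).symm
  -- defining property for κ
  have hκ : μ.map (fun ω => (f (X ω), g (Y ω)))
      = μ.map (fun ω => f (X ω)) ⊗ₘ κ := by
    ext s hs
    have ht : MeasurableSet ((Prod.map f g) ⁻¹' s) :=
      (f.measurable.prodMap hgm) hs
    have hL : (μ.map fun ω => (f (X ω), g (Y ω))) s
        = (μ.map (fun ω => (X ω, Y ω))) ((Prod.map f g) ⁻¹' s) := by
      rw [Measure.map_apply (hfXm.prodMk hgYm) hs,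
        Measure.map_apply (hX.prodMk hY) ht]
      rfl
    rw [hL, ← hdis, Measure.compProd_apply ht, Measure.compProd_apply hs,
      hmapfX, lintegral_map (Kernel.measurable_kernel_prodMk_left hs) f.measurable]
    refine lintegral_congr fun x => ?_
    rw [hκapp x, Measure.map_apply hgm (measurable_prodMk_left hs)]
    rfl
  have hae : ∀ᵐ x ∂(μ.map (fun ω => f (X ω))),
      κ x = condDistrib (fun ω => g (Y ω)) (fun ω => f (X ω)) μ x :=
    (condDistrib_ae_eq_of_measure_eq_compProd (fun ω => f (X ω)) hgYm.aemeasurable hκ).symm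
  rw [hmapfX] at hae
  have hae' : ∀ᵐ x ∂(μ.map X),
      κ (f x) = condDistrib (fun ω => g (Y ω)) (fun ω => f (X ω)) μ (f x) :=
    ae_map_equiv f (μ.map X) hae
  -- rewrite the left integral over μ.map X
  rw [hmapfX, MeasureTheory.integral_map_equiv f]
  refine integral_congr_ae ?_
  filter_upwards [hae'] with x hx
  rw [← hx, hκapp x]
  have hmapgY : μ.map (fun ω => g (Y ω)) = (μ.map Y).map e := by
    rw [Measure.map_map e.measurable hY]
    rfl
  have hmapg : (condDistrib Y X μ x).map g = (condDistrib Y X μ x).map e := rfl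
  rw [hmapgY, hmapg, wass_map e he p]
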